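/- arXiv:2602.11057 — 2 statements merged into one kernel-verified Lean document; each statement's English description precedes it below -/
import Mathlib

section
/- Let f : ℝ^d → ℝ be convex and ρ-Lipschitz, and let w* minimize f over the ball of radius B. Run the gradient descent iteration w^(t+1) = w^(t) − η·v_t with w^(1) = 0, where v_t is a subgradient of f at w^(t), and set η = B/(ρ·√T). Then the average iterate w̄ = (1/T)·Σ_{t=1}^T w^(t) satisfies f(w̄) − f(w*) ≤ B·ρ/√T. In particular, for any ε > 0, taking T ≥ B²ρ²/ε² guarantees f(w̄) − f(w*) ≤ ε. -/
open RealInnerProductSpace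

theorem stmt8 {d : ℕ} (f : EuclideanSpace ℝ (Fin d) → ℝ)
    (hconv : ConvexOn ℝ Set.univ f) (ρ B : ℝ) (hρ : 0 < ρ) (hB : 0 < B)
    (hlip : ∀ x y, |f x - f y| ≤ ρ * ‖x - y‖)
    (wstar : EuclideanSpace ℝ (Fin d)) (hwstar : ‖wstar‖ ≤ B)
    (hmin : ∀ u, ‖u‖ ≤ B → f wstar ≤ f u)
    (T : ℕ) (hT : 1 ≤ T)
    (η : ℝ) (hη : η = B / (ρ * Real.sqrt T))
    (w v : ℕ → EuclideanSpace ℝ (Fin d))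
    (hw1 : w 1 = 0)
    (hrec : ∀ t, w (t + 1) = w t - η • v t)
    (hsub : ∀ t, ∀ u, f (w t) + ⟪v t, u - w t⟫ ≤ f u) :
    f ((T : ℝ)⁻¹ • ∑ t ∈ Finset.Icc 1 T, w t) - f wstar ≤ B * ρ / Real.sqrt T ∧
    ∀ ε > 0, B ^ 2 * ρ ^ 2 / ε ^ 2 ≤ (T : ℝ) →
      f ((T : ℝ)⁻¹ • ∑ t ∈ Finset.Icc 1 T, w t) - f wstar ≤ ε := by
  have hT0 : (0:ℝ) < T := by exact_mod_cast hT
  have hs : 0 < Real.sqrt T := Real.sqrt_pos.2 hT0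
  have hs2 : Real.sqrt T * Real.sqrt T = T := Real.mul_self_sqrt hT0.le
  have hη0 : 0 < η := by rw [hη]; positivity
  -- bound on subgradient norms
  have hv : ∀ t, ‖v t‖ ≤ ρ := by
    intro t
    have h1 := hsub t (w t + v t)
    rw [add_sub_cancel_left] at h1
    have h2 : f (w t + v t) - f (w t) ≤ ρ * ‖v t‖ := by
      have := (abs_le.mp (hlip (w t + v t) (w t))).2
      simpa [add_sub_cancel_left] using this
    have h3 : ‖v t‖ ^ 2 ≤ ρ * ‖v t‖ := by
      rw [← real_inner_self_eq_norm_sq]; linarith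
    nlinarith [norm_nonneg (v t)]
  -- per-step identity
  set a : ℕ → ℝ := fun t => ‖w t - wstar‖ ^ 2 with ha
  have key : ∀ t, ⟪v t, w t - wstar⟫ =
      (a t - a (t + 1)) / (2 * η) + η / 2 * ‖v t‖ ^ 2 := by
    intro t
    set x : ℝ := ⟪v t, w t - wstar⟫ with hx
    have h1 : a (t + 1) = a t - 2 * η * x + η ^ 2 * ‖v t‖ ^ 2 := by
      have hwc : w (t + 1) - wstar = (w t - wstar) - η • v t := by
        rw [hrec]; abel
      simp only [ha, hwc]
      rw [norm_sub_sq_real, real_inner_smul_right, norm_smul, real_inner_comm, ← hx]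
      simp only [Real.norm_eq_abs, abs_of_pos hη0, mul_pow]
      ring
    have h2 : a t - a (t + 1) = 2 * η * x - η ^ 2 * ‖v t‖ ^ 2 := by linarith
    rw [h2]
    field_simp
    ring
  -- telescoping sum bound
  have htel : ∑ t ∈ Finset.Icc 1 T, (a t - a (t + 1)) = a 1 - a (T + 1) := by
    rw [← Finset.Ico_add_one_right_eq_Icc, Finset.sum_Ico_eq_sum_range]
    simp only [Nat.succ_sub_one, add_assoc]
    rw [Finset.sum_range_sub' (fun i => a (1 + i))]
    simp [add_comm]
  have ha1 : a 1 ≤ B ^ 2 := by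
    simp only [ha, hw1, zero_sub, norm_neg]
    nlinarith [norm_nonneg wstar]
  have haT : 0 ≤ a (T + 1) := by positivity
  have hsum : ∑ t ∈ Finset.Icc 1 T, ⟪v t, w t - wstar⟫ ≤ B * ρ * Real.sqrt T := by
    calc ∑ t ∈ Finset.Icc 1 T, ⟪v t, w t - wstar⟫
        = (∑ t ∈ Finset.Icc 1 T, (a t - a (t + 1))) / (2 * η)
          + ∑ t ∈ Finset.Icc 1 T, η / 2 * ‖v t‖ ^ 2 := by
          rw [Finset.sum_div, ← Finset.sum_add_distrib]
          exact Finset.sum_congr rfl fun t _ => key t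
      _ ≤ B ^ 2 / (2 * η) + ∑ t ∈ Finset.Icc 1 T, η / 2 * ρ ^ 2 := by
          gcongr with t ht
          · rw [htel]; linarith
          · nlinarith [hv t, norm_nonneg (v t)]
      _ = B ^ 2 / (2 * η) + T * (η / 2 * ρ ^ 2) := by
          rw [Finset.sum_const, Nat.card_Icc, Nat.add_sub_cancel, nsmul_eq_mul]
      _ = B * ρ * Real.sqrt T := by
          have e1 : B ^ 2 / (2 * η) = B * ρ * Real.sqrt T / 2 := by
            rw [hη]; field_simp
          have e2 : (T : ℝ) * (η / 2 * ρ ^ 2) = B * ρ * Real.sqrt T / 2 := by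
            rw [hη]; field_simp; linear_combination (-1) * hs2
          rw [e1, e2]; ring
  -- Jensen
  have hcard : (Finset.Icc 1 T).card = T := by rw [Nat.card_Icc]; omega
  have hjensen : f ((T : ℝ)⁻¹ • ∑ t ∈ Finset.Icc 1 T, w t)
      ≤ ∑ t ∈ Finset.Icc 1 T, (T : ℝ)⁻¹ * f (w t) := by
    have := hconv.map_sum_le (t := Finset.Icc 1 T) (w := fun _ => (T : ℝ)⁻¹)
      (p := fun t => w t) (fun i _ => by positivity)
      (by rw [Finset.sum_const, hcard, nsmul_eq_mul]; field_simp)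
      (fun i _ => Set.mem_univ _)
    simpa [Finset.smul_sum] using this
  have hsubst : ∀ t, f (w t) - f wstar ≤ ⟪v t, w t - wstar⟫ := by
    intro t
    have := hsub t wstar
    have hi : ⟪v t, wstar - w t⟫ = -⟪v t, w t - wstar⟫ := by
      rw [← inner_neg_right]; congr 1; abel
    rw [hi] at this; linarith
  have hmain : f ((T : ℝ)⁻¹ • ∑ t ∈ Finset.Icc 1 T, w t) - f wstar
      ≤ B * ρ / Real.sqrt T := by
    have h1 : f ((T : ℝ)⁻¹ • ∑ t ∈ Finset.Icc 1 T, w t) - f wstar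
        ≤ (T : ℝ)⁻¹ * ∑ t ∈ Finset.Icc 1 T, ⟪v t, w t - wstar⟫ := by
      have h2 : ∑ t ∈ Finset.Icc 1 T, (T : ℝ)⁻¹ * f (w t)
          = (T : ℝ)⁻¹ * ∑ t ∈ Finset.Icc 1 T, f (w t) := by
        rw [Finset.mul_sum]
      have h3 : ∑ t ∈ Finset.Icc 1 T, f (w t)
          ≤ ∑ t ∈ Finset.Icc 1 T, (f wstar + ⟪v t, w t - wstar⟫) := by
        exact Finset.sum_le_sum fun t _ => by linarith [hsubst t]
      rw [Finset.sum_add_distrib, Finset.sum_const, hcard, nsmul_eq_mul] at h3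
      have := hjensen
      rw [h2] at this
      have h4 : (T:ℝ)⁻¹ * ∑ t ∈ Finset.Icc 1 T, f (w t)
          ≤ (T:ℝ)⁻¹ * ((T:ℝ) * f wstar + ∑ t ∈ Finset.Icc 1 T, ⟪v t, w t - wstar⟫) := by
        exact mul_le_mul_of_nonneg_left h3 (by positivity)
      rw [mul_add, inv_mul_cancel_left₀ (ne_of_gt hT0)] at h4
      linarith
    have h5 : (T : ℝ)⁻¹ * ∑ t ∈ Finset.Icc 1 T, ⟪v t, w t - wstar⟫
        ≤ (T : ℝ)⁻¹ * (B * ρ * Real.sqrt T) := by gcongr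
    have h6 : (T : ℝ)⁻¹ * (B * ρ * Real.sqrt T) = B * ρ / Real.sqrt T := by
      field_simp
      linear_combination hs2
    linarith
  refine ⟨hmain, fun ε hε hTε => ?_⟩
  have hBρε : B * ρ / ε ≤ Real.sqrt T := by
    have : Real.sqrt (B ^ 2 * ρ ^ 2 / ε ^ 2) ≤ Real.sqrt T := Real.sqrt_le_sqrt hTε
    have heq : Real.sqrt (B ^ 2 * ρ ^ 2 / ε ^ 2) = B * ρ / ε := by
      rw [show B ^ 2 * ρ ^ 2 / ε ^ 2 = (B * ρ / ε) ^ 2 by ring]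
      exact Real.sqrt_sq (by positivity)
    rw [heq] at this; exact this
  have : B * ρ / Real.sqrt T ≤ ε := by
    rw [div_le_iff₀ hs]
    have : ε * (B * ρ / ε) ≤ ε * Real.sqrt T := by gcongr
    rw [mul_div_cancel₀ _ (ne_of_gt hε)] at this
    linarith
  linarith
end

section
/- Let f : ℝ^n → ℝ be differentiable with L-Lipschitz gradient, and suppose step sizes satisfy η_t → 0 and Σ_t η_t = ∞, with updates w_{t+1} = w_t + η_t·v_t where c₁·‖∇f(w_t)‖² ≤ −⟨∇f(w_t), v_t⟩ and ‖v_t‖ ≤ c₂·‖∇f(w_t)‖ for positive constants c₁, c₂. Then either f(w_t) → −∞, or f(w_t) converges to a finite value and ∇f(w_t) → 0 as t → ∞. -/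
open RealInnerProductSpace Filter Set

lemma arith_step (L c₂ η q d p : ℝ) (hL : 0 < L) (hc₂ : 0 < c₂) (hη : 0 < η)
    (hη1 : η ≤ 1) (hq : 0 ≤ q) (hd : 0 ≤ d) (hp : 0 ≤ p)
    (h1 : p ≤ q + d) (h2 : d ≤ L * c₂ * η * q) :
    p ^ 2 ≤ q ^ 2 + L * c₂ * (2 + L * c₂) * (η * q ^ 2) := by
  have hp2 : p ^ 2 ≤ (q + d) ^ 2 := by nlinarith
  have h2qd : 2 * q * d ≤ 2 * L * c₂ * η * q ^ 2 := by nlinarith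
  have hdsq : d ^ 2 ≤ (L * c₂) ^ 2 * η * q ^ 2 := by
    have ha : d ^ 2 ≤ (L * c₂ * η * q) ^ 2 := by nlinarith
    have hb : (L * c₂ * η * q) ^ 2 = (L * c₂) ^ 2 * (η ^ 2) * q ^ 2 := by ring
    have hc : η ^ 2 ≤ η := by nlinarith
    nlinarith [sq_nonneg (L * c₂), sq_nonneg q, mul_nonneg (sq_nonneg (L * c₂)) (sq_nonneg q)]
  nlinarith

lemma descent_lemma {n : ℕ} (f : EuclideanSpace ℝ (Fin n) → ℝ)
    (hf : Differentiable ℝ f) (L : ℝ) (hL : 0 < L)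
    (hlip : ∀ w w', ‖gradient f w - gradient f w'‖ ≤ L * ‖w - w'‖)
    (x y : EuclideanSpace ℝ (Fin n)) :
    f y ≤ f x + ⟪gradient f x, y - x⟫ + L * ‖y - x‖ ^ 2 := by
  set γ : ℝ → EuclideanSpace ℝ (Fin n) := fun s => x + s • (y - x) with hγ
  have hγd : ∀ s : ℝ, HasDerivAt γ (y - x) s := by
    intro s
    simpa [hγ] using ((hasDerivAt_id s).smul_const (y - x)).const_add x
  have hg : ∀ s : ℝ, HasDerivAt (fun s => f (γ s)) ⟪gradient f (γ s), y - x⟫ s := by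
    intro s
    have h2 : HasFDerivAt f (InnerProductSpace.toDual ℝ _ (gradient f (γ s))) (γ s) :=
      hasGradientAt_iff_hasFDerivAt.1 (hf.differentiableAt.hasGradientAt)
    simpa [Function.comp_def] using h2.comp_hasDerivAt s (hγd s)
  obtain ⟨c, hc, hceq⟩ := exists_hasDerivAt_eq_slope (fun s => f (γ s))
      (fun s => ⟪gradient f (γ s), y - x⟫) (by norm_num : (0:ℝ) < 1)
      (fun s _ => (hg s).continuousAt.continuousWithinAt) (fun s _ => hg s)
  have h0 : γ 0 = x := by simp [hγ]
  have h1 : γ 1 = y := by simp [hγ]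
  rw [h0, h1] at hceq
  simp only [sub_zero, div_one] at hceq
  have key : f y - f x = ⟪gradient f (γ c), y - x⟫ := hceq.symm
  have hsplit : ⟪gradient f (γ c), y - x⟫ =
      ⟪gradient f x, y - x⟫ + ⟪gradient f (γ c) - gradient f x, y - x⟫ := by
    rw [inner_sub_left]; ring
  have hbound : ⟪gradient f (γ c) - gradient f x, y - x⟫ ≤ L * ‖y - x‖ ^ 2 := by
    calc ⟪gradient f (γ c) - gradient f x, y - x⟫
        ≤ ‖gradient f (γ c) - gradient f x‖ * ‖y - x‖ := real_inner_le_norm _ _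
      _ ≤ (L * ‖γ c - x‖) * ‖y - x‖ := by
          have := hlip (γ c) x
          nlinarith [norm_nonneg (y - x)]
      _ ≤ L * ‖y - x‖ ^ 2 := by
          have : ‖γ c - x‖ = c * ‖y - x‖ := by
            simp [hγ, norm_smul, abs_of_pos hc.1]
          rw [this]
          nlinarith [mul_nonneg (mul_nonneg hL.le (sq_nonneg ‖y-x‖)) (sub_nonneg.2 hc.2.le)]
  linarith [key, hsplit ▸ key]


lemma seq_to_zero (a b : ℕ → ℝ) (ha : ∀ t, 0 ≤ a t) (hb : ∀ t, 0 ≤ b t)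
    (hsum : Summable b) (T : ℕ) (hstep : ∀ t, T ≤ t → a (t + 1) ≤ a t + b t)
    (hinf : ∀ ε > (0:ℝ), ∀ s : ℕ, ∃ t, s ≤ t ∧ a t < ε) :
    Tendsto a atTop (nhds 0) := by
  rw [Metric.tendsto_atTop]
  intro ε hε
  set S : ℕ → ℝ := fun m => ∑ t ∈ Finset.range m, b t with hS
  have hcauchy : CauchySeq S := (hsum.hasSum.tendsto_sum_nat).cauchySeq
  obtain ⟨N, hN⟩ := Metric.cauchySeq_iff'.1 hcauchy (ε/4) (by linarith)
  obtain ⟨m, hm, ham⟩ := hinf (ε/2) (by linarith) (max N T)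
  refine ⟨m, fun t ht => ?_⟩
  have hsum_bound : ∀ u, m ≤ u → a u ≤ a m + (S u - S m) := by
    intro u hu
    induction u, hu using Nat.le_induction with
    | base => simp
    | succ u hu ih =>
      have h1 : a (u + 1) ≤ a u + b u := hstep u (le_trans (le_trans (le_max_right N T) hm) hu)
      have h2 : S (u + 1) = S u + b u := Finset.sum_range_succ b u
      linarith
  have hSm : dist (S m) (S N) < ε/4 := hN m (le_trans (le_max_left N T) hm)
  have hSt : dist (S t) (S N) < ε/4 := hN t (le_trans (le_trans (le_max_left N T) hm) ht)
  have h3 : S t - S m < ε/2 := by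
    have := abs_sub_abs_le_abs_sub (S t - S N) (S m - S N)
    rw [Real.dist_eq] at hSm hSt
    have : |S t - S m| ≤ |S t - S N| + |S m - S N| := by
      have := abs_sub (S t - S N) (S m - S N)
      calc |S t - S m| = |(S t - S N) - (S m - S N)| := by ring_nf
        _ ≤ |S t - S N| + |S m - S N| := abs_sub _ _
    calc S t - S m ≤ |S t - S m| := le_abs_self _
      _ ≤ |S t - S N| + |S m - S N| := this
      _ < ε/4 + ε/4 := by linarith
      _ = ε/2 := by ring
  have := hsum_bound t ht
  rw [Real.dist_eq, sub_zero, abs_of_nonneg (ha t)]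
  linarith

set_option maxHeartbeats 1000000 in
theorem stmt13 {n : ℕ} (f : EuclideanSpace ℝ (Fin n) → ℝ)
    (hf : Differentiable ℝ f) (L : ℝ) (hL : 0 < L)
    (hlip : ∀ w w', ‖gradient f w - gradient f w'‖ ≤ L * ‖w - w'‖)
    (η : ℕ → ℝ) (hη_pos : ∀ t, 0 < η t)
    (hη_to_zero : Tendsto η atTop (nhds 0))
    (hη_div : Tendsto (fun N => ∑ t ∈ Finset.range N, η t) atTop atTop)
    (c₁ c₂ : ℝ) (hc₁ : 0 < c₁) (hc₂ : 0 < c₂)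
    (w v : ℕ → EuclideanSpace ℝ (Fin n))
    (hrec : ∀ t, w (t + 1) = w t + η t • v t)
    (hdesc : ∀ t, c₁ * ‖gradient f (w t)‖ ^ 2 ≤ -⟪gradient f (w t), v t⟫)
    (hnorm : ∀ t, ‖v t‖ ≤ c₂ * ‖gradient f (w t)‖) :
    Tendsto (fun t => f (w t)) atTop atBot ∨
      ((∃ a : ℝ, Tendsto (fun t => f (w t)) atTop (nhds a)) ∧
        Tendsto (fun t => gradient f (w t)) atTop (nhds 0)) := by
  set g : ℕ → EuclideanSpace ℝ (Fin n) := fun t => gradient f (w t) with hg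
  set h : ℕ → ℝ := fun t => η t * ‖g t‖ ^ 2 with hh
  have hh_nonneg : ∀ t, 0 ≤ h t := fun t =>
    mul_nonneg (hη_pos t).le (sq_nonneg _)
  set δ : ℝ := min (c₁ / (2 * L * c₂ ^ 2)) 1 with hδ
  have hδ_pos : 0 < δ := lt_min (by positivity) one_pos
  obtain ⟨T, hT⟩ : ∃ T : ℕ, ∀ t, T ≤ t → η t < δ := by
    have := hη_to_zero.eventually (gt_mem_nhds hδ_pos)
    exact eventually_atTop.1 this
  -- main descent step
  have step : ∀ t, T ≤ t → f (w (t + 1)) ≤ f (w t) - c₁ / 2 * h t := by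
    intro t ht
    have hd := descent_lemma f hf L hL hlip (w t) (w (t + 1))
    have hsub : w (t + 1) - w t = η t • v t := by rw [hrec t]; abel
    rw [hsub] at hd
    have hin : ⟪g t, η t • v t⟫ = η t * ⟪g t, v t⟫ := real_inner_smul_right _ _ _
    have hnrm : ‖η t • v t‖ = η t * ‖v t‖ := by
      rw [norm_smul, Real.norm_eq_abs, abs_of_pos (hη_pos t)]
    rw [hin, hnrm] at hd
    have h1 : ⟪g t, v t⟫ ≤ -(c₁ * ‖g t‖ ^ 2) := by linarith [hdesc t]
    have h2 : ‖v t‖ ^ 2 ≤ c₂ ^ 2 * ‖g t‖ ^ 2 := by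
      nlinarith [hnorm t, norm_nonneg (v t), norm_nonneg (g t)]
    have hηδ : η t ≤ c₁ / (2 * L * c₂ ^ 2) := le_trans (hT t ht).le (min_le_left _ _)
    have hηδ' : η t * (2 * L * c₂ ^ 2) ≤ c₁ :=
      (le_div_iff₀ (by positivity)).1 hηδ
    have e1 : η t * ⟪g t, v t⟫ ≤ η t * (-(c₁ * ‖g t‖ ^ 2)) :=
      mul_le_mul_of_nonneg_left h1 (hη_pos t).le
    have e4 : η t ^ 2 * ‖v t‖ ^ 2 ≤ η t ^ 2 * (c₂ ^ 2 * ‖g t‖ ^ 2) :=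
      mul_le_mul_of_nonneg_left h2 (sq_nonneg _)
    have e5 : (η t * ‖g t‖ ^ 2) * (η t * (2 * L * c₂ ^ 2)) ≤ (η t * ‖g t‖ ^ 2) * c₁ :=
      mul_le_mul_of_nonneg_left hηδ' (mul_nonneg (hη_pos t).le (sq_nonneg _))
    have e2 : L * (η t * ‖v t‖) ^ 2 ≤ c₁ / 2 * (η t * ‖g t‖ ^ 2) := by nlinarith [hL.le]
    simp only [hh]
    nlinarith [hd, e1, e2]
  -- the eventually-antitone sequence
  set F : ℕ → ℝ := fun k => f (w (T + k)) with hF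
  have hF_anti : Antitone F := by
    apply antitone_nat_of_succ_le
    intro k
    have := step (T + k) (Nat.le_add_right T k)
    have hge : 0 ≤ c₁ / 2 * h (T + k) := mul_nonneg (by positivity) (hh_nonneg _)
    calc F (k + 1) = f (w (T + k + 1)) := by rw [hF]; ring_nf
      _ ≤ f (w (T + k)) - c₁ / 2 * h (T + k) := this
      _ ≤ F k := by simp [hF]; linarith
  have hshift : (fun k => f (w (T + k))) = fun k => f (w (k + T)) := by
    funext k; rw [Nat.add_comm]
  rcases tendsto_of_antitone hF_anti with hbot | ⟨A, hA⟩
  · left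
    rw [hF, hshift] at hbot
    exact (tendsto_add_atTop_iff_nat T).1 hbot
  · right
    constructor
    · exact ⟨A, (tendsto_add_atTop_iff_nat T).1 (hshift ▸ (hF ▸ hA))⟩
    -- lower bound for F
    have hge : ∀ k, A ≤ F k := fun k =>
      le_of_tendsto hA (eventually_atTop.2 ⟨k, fun m hm => hF_anti hm⟩)
    -- telescoping sum bound
    have htel : ∀ K : ℕ, ∑ k ∈ Finset.range K, c₁ / 2 * h (T + k) ≤ F 0 - F K := by
      intro K
      induction K with
      | zero => simp
      | succ K ih =>
        rw [Finset.sum_range_succ]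
        have := step (T + K) (Nat.le_add_right T K)
        have hFK : F (K + 1) = f (w (T + K + 1)) := by rw [hF]; ring_nf
        have hFK' : F K = f (w (T + K)) := rfl
        linarith
    have hsum_shift : Summable (fun k => h (T + k)) := by
      apply summable_of_sum_range_le (fun k => hh_nonneg _) (c := (F 0 - A) / (c₁ / 2))
      intro K
      rw [le_div_iff₀ (by positivity)]
      have := htel K
      have := hge K
      have hmul : ∑ k ∈ Finset.range K, c₁ / 2 * h (T + k)
          = (∑ k ∈ Finset.range K, h (T + k)) * (c₁ / 2) := by
        rw [Finset.sum_mul]; congr 1; funext k; ring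
      linarith [hmul ▸ htel K]
    have hsum : Summable h := by
      rw [← summable_nat_add_iff T]
      have : (fun k => h (k + T)) = fun k => h (T + k) := by
        funext k; rw [Nat.add_comm]
      rw [this]; exact hsum_shift
    -- liminf of ‖g‖² is 0
    have hinf : ∀ ε > (0:ℝ), ∀ s : ℕ, ∃ t, s ≤ t ∧ ‖g t‖ ^ 2 < ε := by
      intro ε hε s
      by_contra hcon
      push_neg at hcon
      have hηsum : Summable (fun t => η (t + s)) := by
        refine Summable.of_nonneg_of_le (fun t => (hη_pos _).le) (fun t => ?_)
          (((summable_nat_add_iff s).2 hsum).mul_left ε⁻¹)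
        have h1 : ε ≤ ‖g (t + s)‖ ^ 2 := hcon (t + s) (Nat.le_add_left s t)
        have h2 : ε * η (t + s) ≤ h (t + s) := by
          simp only [hh]
          nlinarith [hη_pos (t + s)]
        rw [← mul_le_mul_iff_right₀ hε]
        calc ε * η (t + s) ≤ h (t + s) := h2
          _ = ε * (ε⁻¹ * h (t + s)) := by field_simp
      have hηsum' : Summable η := (summable_nat_add_iff s).1 hηsum
      exact not_tendsto_atTop_of_tendsto_nhds hηsum'.hasSum.tendsto_sum_nat hη_div
    -- bounded increments of ‖g‖²
    set K0 : ℝ := L * c₂ * (2 + L * c₂) with hK0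
    have hstep2 : ∀ t, T ≤ t → ‖g (t + 1)‖ ^ 2 ≤ ‖g t‖ ^ 2 + K0 * h t := by
      intro t ht
      have hdl : ‖g (t + 1) - g t‖ ≤ L * (η t * ‖v t‖) := by
        have := hlip (w (t + 1)) (w t)
        have hsub : w (t + 1) - w t = η t • v t := by rw [hrec t]; abel
        rw [hsub, norm_smul, Real.norm_eq_abs, abs_of_pos (hη_pos t)] at this
        exact this
      have hdl2 : ‖g (t + 1) - g t‖ ≤ L * c₂ * η t * ‖g t‖ := by
        have h5 : η t * ‖v t‖ ≤ η t * (c₂ * ‖g t‖) :=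
          mul_le_mul_of_nonneg_left (hnorm t) (hη_pos t).le
        have h6 : L * (η t * ‖v t‖) ≤ L * (η t * (c₂ * ‖g t‖)) :=
          mul_le_mul_of_nonneg_left h5 hL.le
        calc ‖g (t + 1) - g t‖ ≤ L * (η t * ‖v t‖) := hdl
          _ ≤ L * (η t * (c₂ * ‖g t‖)) := h6
          _ = L * c₂ * η t * ‖g t‖ := by ring
      have htri : ‖g (t + 1)‖ ≤ ‖g t‖ + ‖g (t + 1) - g t‖ := by
        have := norm_sub_norm_le (g (t + 1)) (g t)
        linarith
      have hη1 : η t ≤ 1 := le_trans (hT t ht).le (min_le_right _ _)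
      simp only [hh, hK0]
      exact arith_step L c₂ (η t) ‖g t‖ ‖g (t + 1) - g t‖ ‖g (t + 1)‖ hL hc₂
        (hη_pos t) hη1 (norm_nonneg _) (norm_nonneg _) (norm_nonneg _) htri hdl2
    have hb_nonneg : ∀ t, 0 ≤ K0 * h t := fun t =>
      mul_nonneg (by positivity) (hh_nonneg t)
    have hsq0 : Tendsto (fun t => ‖g t‖ ^ 2) atTop (nhds 0) :=
      seq_to_zero (fun t => ‖g t‖ ^ 2) (fun t => K0 * h t) (fun t => sq_nonneg _)
        hb_nonneg (hsum.mul_left K0) T hstep2 hinf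
    have hnorm0 : Tendsto (fun t => ‖g t‖) atTop (nhds 0) := by
      have h2 : Tendsto (fun t => Real.sqrt (‖g t‖ ^ 2)) atTop (nhds (Real.sqrt 0)) :=
        hsq0.sqrt
      have heq : (fun t => Real.sqrt (‖g t‖ ^ 2)) = fun t => ‖g t‖ :=
        funext fun t => Real.sqrt_sq (norm_nonneg _)
      rw [heq, Real.sqrt_zero] at h2
      exact h2
    exact tendsto_zero_iff_norm_tendsto_zero.2 hnorm0
end
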